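/- Let δ₀ > 0, δ > 0, α > 0, β ∈ (0,1], β' > 0, C > 0, C₀ > 0 be constants with α > 2β'/β − 1, and for each ε ∈ (0, δ₀) let Θ_ε : [0,π] → [0,π] be a continuous strictly increasing bijection satisfying: (1) Θ_ε(0)=0 and Θ_ε(π)=π; (2) Θ_ε(π−θ) = π − Θ_ε(θ) for all θ ∈ [0,π]; (3) Θ_ε(θ₁) + Θ_ε(θ₂) ≤ Θ_ε(θ₁+θ₂) for all θ₁, θ₂ ∈ [0,π] with θ₁+θ₂ ∈ [0,π]; (4) for every continuous convex function J : [0,π] → ℝ with sup_{[0,π]} |J| ≤ ε^{−α} one has ∫₀^π J(Θ_ε(θ))·sin θ dθ ≤ ∫₀^π J(θ)·sin θ dθ + C₀·ε; (5) |Θ_ε(θ₁) − Θ_ε(θ₂)| ≤ C·(ε^δ + ε^{−β'}·|θ₁−θ₂|^β) for all θ₁, θ₂ ∈ [0,π]. Set γ̂ := (1 + α − 2β'/β)/(1 + 2/β). Then for every γ with 0 < γ < γ̂ and γ < δ there exists a constant C' > 0 such that for all ε ∈ (0, δ₀) and all θ ∈ [0,π], |Θ_ε(θ) − θ| ≤ C'·ε^γ.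 -/

import Mathlib

open Real Set

private lemma rpow_root_le {x y p : ℝ} (hx : 0 ≤ x) (hp : 0 < p)
    (h : x ^ p ≤ y) : x ≤ y ^ (1/p) := by
  have h2 := Real.rpow_le_rpow (Real.rpow_nonneg hx p) h (by positivity : (0:ℝ) ≤ 1/p)
  rwa [← Real.rpow_mul hx, mul_one_div, div_self hp.ne', Real.rpow_one] at h2

set_option maxHeartbeats 1000000 in
/-- Quantitative version of Otal's lemma for families of increasing homeomorphisms
of `[0, π]`. -/
theorem otal_lemma_quantitative
    (δ₀ δ α β β' C C₀ : ℝ)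
    (hδ₀ : 0 < δ₀) (hδ : 0 < δ) (hα : 0 < α) (hβ : β ∈ Set.Ioc (0 : ℝ) 1)
    (hβ' : 0 < β') (hC : 0 < C) (hC₀ : 0 < C₀)
    (hαβ : α > 2 * β' / β - 1)
    (Θ : ℝ → ℝ → ℝ)
    (hcont : ∀ ε ∈ Set.Ioo 0 δ₀, ContinuousOn (Θ ε) (Set.Icc 0 π))
    (hmono : ∀ ε ∈ Set.Ioo 0 δ₀, StrictMonoOn (Θ ε) (Set.Icc 0 π))
    (hbij : ∀ ε ∈ Set.Ioo 0 δ₀, Set.BijOn (Θ ε) (Set.Icc 0 π) (Set.Icc 0 π))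
    (h0 : ∀ ε ∈ Set.Ioo 0 δ₀, Θ ε 0 = 0)
    (hπ : ∀ ε ∈ Set.Ioo 0 δ₀, Θ ε π = π)
    (hsym : ∀ ε ∈ Set.Ioo 0 δ₀, ∀ θ ∈ Set.Icc 0 π, Θ ε (π - θ) = π - Θ ε θ)
    (hsuper : ∀ ε ∈ Set.Ioo 0 δ₀, ∀ θ₁ ∈ Set.Icc 0 π, ∀ θ₂ ∈ Set.Icc 0 π,
      θ₁ + θ₂ ∈ Set.Icc 0 π → Θ ε θ₁ + Θ ε θ₂ ≤ Θ ε (θ₁ + θ₂))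
    (hconv : ∀ ε ∈ Set.Ioo 0 δ₀, ∀ J : ℝ → ℝ, ContinuousOn J (Set.Icc 0 π) →
      ConvexOn ℝ (Set.Icc 0 π) J → (∀ x ∈ Set.Icc 0 π, |J x| ≤ ε ^ (-α)) →
      ∫ θ in (0 : ℝ)..π, J (Θ ε θ) * Real.sin θ ≤
        (∫ θ in (0 : ℝ)..π, J θ * Real.sin θ) + C₀ * ε)
    (hholder : ∀ ε ∈ Set.Ioo 0 δ₀, ∀ θ₁ ∈ Set.Icc 0 π, ∀ θ₂ ∈ Set.Icc 0 π,
      |Θ ε θ₁ - Θ ε θ₂| ≤ C * (ε ^ δ + ε ^ (-β') * |θ₁ - θ₂| ^ β)) :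
    ∀ γ : ℝ, 0 < γ → γ < (1 + α - 2 * β' / β) / (1 + 2 / β) → γ < δ →
      ∃ C' > 0, ∀ ε ∈ Set.Ioo 0 δ₀, ∀ θ ∈ Set.Icc 0 π,
        |Θ ε θ - θ| ≤ C' * ε ^ γ := by
  intro γ hγ0 hγhat hγδ
  obtain ⟨hβ0, hβ1⟩ := hβ
  have hπ0 : (0:ℝ) < π := pi_pos
  -- exponent arithmetic
  have hrwhat : (1 + α - 2 * β' / β) / (1 + 2 / β) = (β * (1+α) - 2*β') / (β + 2) := by
    rw [div_eq_div_iff (by positivity) (by linarith)]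
    field_simp
  rw [hrwhat] at hγhat
  have hkeyγ : γ * (β + 2) < β * (1 + α) - 2 * β' :=
    (lt_div_iff₀ (by linarith : (0:ℝ) < β + 2)).mp hγhat
  have e1γ : 3 * γ ≤ 1 + α := by nlinarith
  have e2γ : γ * (1 + 2*β) ≤ (1 + α) * β - β' := by nlinarith
  -- the constant
  set T2 : ℝ := (24*π*C₀) ^ ((1:ℝ)/3) with hT2def
  set T3 : ℝ := (6*C*(4*π*C₀)^β) ^ ((1:ℝ)/(1+2*β)) with hT3def
  have hT2 : 0 < T2 := by positivity
  have hT3 : 0 < T3 := by positivity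
  refine ⟨π + 6*C + T2 + T3, by positivity, ?_⟩
  intro ε hε θ hθ
  have hε0 : 0 < ε := hε.1
  have hεγ : 0 < ε ^ γ := rpow_pos_of_pos hε0 γ
  have hmaps : MapsTo (Θ ε) (Icc 0 π) (Icc 0 π) := (hbij ε hε).mapsTo
  have htriv : |Θ ε θ - θ| ≤ π := by
    have h1 := hmaps hθ
    rw [abs_le]
    constructor
    · have := h1.1; have := hθ.2; linarith
    · have := h1.2; have := hθ.1; linarith
  by_cases hε1 : 1 ≤ ε
  · have h1 : (1:ℝ) ≤ ε ^ γ := by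
      calc (1:ℝ) = 1 ^ γ := by simp
      _ ≤ ε ^ γ := rpow_le_rpow (by norm_num) hε1 hγ0.le
    calc |Θ ε θ - θ| ≤ π := htriv
    _ = π * 1 := by ring
    _ ≤ (π + 6*C + T2 + T3) * ε ^ γ := by
        apply mul_le_mul (by linarith) h1 (by norm_num) (by positivity)
  push_neg at hε1
  -- maximizer of u t := Θ ε t - t
  have hucont : ContinuousOn (fun t => Θ ε t - t) (Icc 0 π) :=
    (hcont ε hε).sub continuousOn_id
  obtain ⟨θ₀, hθ₀, hmaxOn⟩ := isCompact_Icc.exists_isMaxOn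
    (Set.nonempty_Icc.mpr hπ0.le) hucont
  set d := Θ ε θ₀ - θ₀ with hd_def
  have hmax' : ∀ t ∈ Icc 0 π, Θ ε t - t ≤ d := fun t ht => hmaxOn ht
  have hd0 : 0 ≤ d := by
    have h1 := hmax' 0 ⟨le_refl 0, hπ0.le⟩
    rw [h0 ε hε] at h1
    simpa using h1
  have husym : ∀ t ∈ Icc 0 π, Θ ε (π - t) - (π - t) = -(Θ ε t - t) := by
    intro t ht; rw [hsym ε hε t ht]; ring
  have habsd : ∀ t ∈ Icc 0 π, |Θ ε t - t| ≤ d := by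
    intro t ht
    rw [abs_le]
    refine ⟨?_, hmax' t ht⟩
    have h1 : π - t ∈ Icc 0 π := ⟨by linarith [ht.2], by linarith [ht.1]⟩
    have h2 := hmax' (π - t) h1
    rw [husym t ht] at h2
    linarith
  have hsuf : d ≤ (π + 6*C + T2 + T3) * ε ^ γ → |Θ ε θ - θ| ≤ (π + 6*C + T2 + T3) * ε ^ γ :=
    fun h => (habsd θ hθ).trans h
  apply hsuf
  have hεδγ : ε ^ δ ≤ ε ^ γ := rpow_le_rpow_of_exponent_ge hε0 hε1.le hγδ.le
  by_cases hcase : d ≤ 6*C*ε^δ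
  · calc d ≤ 6*C*ε^δ := hcase
    _ ≤ 6*C*ε^γ := mul_le_mul_of_nonneg_left hεδγ (by positivity)
    _ ≤ (π + 6*C + T2 + T3) * ε ^ γ := mul_le_mul_of_nonneg_right (by linarith) hεγ.le
  push_neg at hcase
  have hd_pos : 0 < d := lt_trans (by positivity) hcase
  -- superadditivity of u
  have husuper : ∀ x ∈ Icc 0 π, ∀ y ∈ Icc 0 π, x + y ∈ Icc 0 π →
      (Θ ε x - x) + (Θ ε y - y) ≤ Θ ε (x+y) - (x+y) := by
    intro x hx y hy hxy
    have := hsuper ε hε x hx y hy hxy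
    linarith
  have hθ₀half : π/2 < θ₀ := by
    by_contra hcon
    push_neg at hcon
    have h2 : θ₀ + θ₀ ∈ Icc 0 π := ⟨by linarith [hθ₀.1], by linarith⟩
    have h3 := husuper θ₀ hθ₀ θ₀ hθ₀ h2
    have h4 := hmax' (θ₀+θ₀) h2
    rw [← hd_def] at h3
    linarith
  have hupos : ∀ t ∈ Icc θ₀ π, 0 ≤ Θ ε t - t := by
    intro t ht
    have htm : t ∈ Icc 0 π := ⟨le_trans hθ₀.1 ht.1, ht.2⟩
    have hs : π - t ∈ Icc 0 π := ⟨by linarith [ht.2], by linarith [hθ₀.1, ht.1]⟩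
    have hsum : θ₀ + (π - t) ∈ Icc 0 π := ⟨by linarith [hθ₀.1, ht.2], by linarith [ht.1]⟩
    have h1 := husuper θ₀ hθ₀ (π-t) hs hsum
    have h2 := hmax' (θ₀ + (π-t)) hsum
    rw [← hd_def] at h1
    have h3 : Θ ε (π - t) - (π - t) ≤ 0 := by linarith
    have h4 := husym t htm
    linarith
  have hdπθ₀ : d ≤ π - θ₀ := by
    have := (hmaps hθ₀).2
    rw [hd_def]; linarith
  -- the small interval
  set b := (d * ε^β' / (6*C)) ^ ((1:ℝ)/β) with hb_def
  have hbpos : 0 < b := by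
    apply rpow_pos_of_pos
    positivity
  set r₀ := min (d/6) b with hr_def
  have hr0 : 0 < r₀ := lt_min (by positivity) hbpos
  have hrd : r₀ ≤ d/6 := min_le_left _ _
  have hI : θ₀ + r₀ ≤ π := by linarith
  have hbβ : b ^ β = d * ε^β' / (6*C) := by
    rw [hb_def, ← Real.rpow_mul (by positivity), one_div_mul_cancel hβ0.ne', Real.rpow_one]
  have hrb : r₀ ^ β ≤ d * ε^β' / (6*C) := by
    rw [← hbβ]
    exact rpow_le_rpow hr0.le (min_le_right _ _) hβ0.le
  -- u ≥ d/2 on [θ₀, θ₀+r₀]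
  have hlow : ∀ t ∈ Icc θ₀ (θ₀ + r₀), d/2 ≤ Θ ε t - t := by
    intro t ht
    have htmem : t ∈ Icc 0 π := ⟨le_trans hθ₀.1 ht.1, le_trans ht.2 hI⟩
    have hh := hholder ε hε t htmem θ₀ hθ₀
    have habs : |t - θ₀| ≤ r₀ := by
      rw [abs_of_nonneg (by linarith [ht.1])]
      linarith [ht.2]
    have h5 : |t - θ₀| ^ β ≤ r₀ ^ β := rpow_le_rpow (abs_nonneg _) habs hβ0.le
    have h6 : ε^(-β') * (d * ε^β' / (6*C)) = d/(6*C) := by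
      rw [show ε^(-β') * (d * ε^β'/(6*C)) = d * (ε^(-β') * ε^β')/(6*C) by ring,
        ← Real.rpow_add hε0, neg_add_cancel, Real.rpow_zero]
      ring
    have hA : ε^(-β') * |t-θ₀|^β ≤ d/(6*C) := by
      calc ε^(-β') * |t-θ₀|^β ≤ ε^(-β') * (d * ε^β'/(6*C)) := by
            apply mul_le_mul_of_nonneg_left (h5.trans hrb) (le_of_lt (rpow_pos_of_pos hε0 _))
      _ = d/(6*C) := h6
    have hCd : C * (d/(6*C)) = d/6 := by
      field_simp
    have h7 : |Θ ε t - Θ ε θ₀| ≤ d/6 + d/6 := by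
      calc |Θ ε t - Θ ε θ₀| ≤ C * (ε^δ + ε^(-β') * |t-θ₀|^β) := hh
      _ = C * ε^δ + C * (ε^(-β') * |t-θ₀|^β) := by ring
      _ ≤ d/6 + d/6 := by
          have h8 := mul_le_mul_of_nonneg_left hA hC.le
          rw [hCd] at h8
          linarith
    have h8 := (abs_le.mp h7).1
    have h9 : t - θ₀ ≤ r₀ := by linarith [ht.2]
    have h10 : Θ ε θ₀ = d + θ₀ := by rw [hd_def]; ring
    linarith
  -- sin ≥ d/2 on [θ₀, θ₀+r₀]
  have hsin : ∀ t ∈ Icc θ₀ (θ₀ + r₀), d/2 ≤ Real.sin t := by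
    intro t ht
    have h1 : π - t ≤ π/2 := by linarith [ht.1]
    have h2 : 0 ≤ π - t := by linarith [ht.2]
    have h3 := Real.mul_le_sin h2 h1
    rw [Real.sin_pi_sub] at h3
    have h4 : d - d/6 ≤ π - t := by linarith [ht.2]
    have hπlt : π < 3.15 := pi_lt_d2
    have h5 : d/2 ≤ 2/π * (π - t) := by
      rw [show 2/π * (π - t) = 2*(π-t)/π by ring, le_div_iff₀ hπ0]
      have hdπ : d*π ≤ d*3.15 := mul_le_mul_of_nonneg_left hπlt.le hd0
      linarith
    linarith
  -- the convex test function
  set M := ε^(-α)/π with hMdef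
  have hεα : 0 < ε^(-α) := rpow_pos_of_pos hε0 _
  have hM0 : 0 < M := by positivity
  set g := fun x : ℝ => max (x - θ₀) 0 with hgdef
  have hgcont : Continuous g := (continuous_id.sub continuous_const).max continuous_const
  have hgnonneg : ∀ x, 0 ≤ g x := fun x => le_max_right _ _
  have hJcont : ContinuousOn (fun x => M * g x) (Icc 0 π) :=
    (continuous_const.mul hgcont).continuousOn
  have hJconv : ConvexOn ℝ (Icc 0 π) (fun x => M * g x) := by
    have h1 : ConvexOn ℝ (Icc 0 π) (fun x : ℝ => x - θ₀) :=
      (convexOn_id (convex_Icc _ _)).sub (concaveOn_const _ (convex_Icc _ _))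
    have h2 := h1.sup (convexOn_const (0:ℝ) (convex_Icc (0:ℝ) π))
    have h3 := h2.smul hM0.le
    have h4 : (fun x => M * g x) =
        fun x => M • ((fun x : ℝ => x - θ₀) ⊔ fun _ => (0:ℝ)) x := by
      funext x
      simp [hgdef, Pi.sup_apply, smul_eq_mul]
    rw [h4]
    exact h3
  have hJbdd : ∀ x ∈ Icc 0 π, |M * g x| ≤ ε^(-α) := by
    intro x hx
    have h1 : g x ≤ π := max_le (by linarith [hx.2, hθ₀.1]) hπ0.le
    rw [abs_of_nonneg (mul_nonneg hM0.le (hgnonneg x))]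
    calc M * g x ≤ M * π := mul_le_mul_of_nonneg_left h1 hM0.le
    _ = ε^(-α) := by rw [hMdef]; field_simp
  have hint := hconv ε hε (fun x => M * g x) hJcont hJconv hJbdd
  set A := ∫ t in (0:ℝ)..π, g (Θ ε t) * Real.sin t with hAdef
  set B := ∫ t in (0:ℝ)..π, g t * Real.sin t with hBdef
  have eA : ∫ t in (0:ℝ)..π, (M * g (Θ ε t)) * Real.sin t = M * A := by
    simp only [mul_assoc]
    exact intervalIntegral.integral_const_mul M _
  have eB : ∫ t in (0:ℝ)..π, (M * g t) * Real.sin t = M * B := by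
    simp only [mul_assoc]
    exact intervalIntegral.integral_const_mul M _
  have hint2 : M * A ≤ M * B + C₀ * ε := by
    rw [← eA, ← eB]
    exact hint
  have hAB : A - B ≤ C₀ * ε / M := by
    rw [le_div_iff₀ hM0]
    calc (A - B) * M = M*A - M*B := by ring
    _ ≤ C₀ * ε := by linarith
  -- integrability and splitting
  have hIcc : uIcc (0:ℝ) π = Icc 0 π := uIcc_of_le hπ0.le
  have hAint : IntervalIntegrable (fun t => g (Θ ε t) * Real.sin t) MeasureTheory.volume 0 π := by
    apply ContinuousOn.intervalIntegrable
    rw [hIcc]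
    exact (hgcont.comp_continuousOn (hcont ε hε)).mul continuous_sin.continuousOn
  have hBint : IntervalIntegrable (fun t => g t * Real.sin t) MeasureTheory.volume 0 π := by
    apply ContinuousOn.intervalIntegrable
    rw [hIcc]
    exact hgcont.continuousOn.mul continuous_sin.continuousOn
  set φ := fun t => (g (Θ ε t) - g t) * Real.sin t with hφdef
  have hφcont : ContinuousOn φ (Icc 0 π) :=
    ((hgcont.comp_continuousOn (hcont ε hε)).sub hgcont.continuousOn).mul
      continuous_sin.continuousOn
  have hABsub : ∫ t in (0:ℝ)..π, φ t = A - B := by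
    have h1 : φ = fun t => g (Θ ε t) * Real.sin t - g t * Real.sin t := by
      funext t; simp only [hφdef]; ring
    rw [h1, intervalIntegral.integral_sub hAint hBint]
  have hφnonneg : ∀ t ∈ Icc 0 π, 0 ≤ φ t := by
    intro t ht
    apply mul_nonneg _ (Real.sin_nonneg_of_nonneg_of_le_pi ht.1 ht.2)
    rcases le_or_gt t θ₀ with h | h
    · have hgt : g t = 0 := max_eq_right (by linarith)
      rw [hgt, sub_zero]
      exact hgnonneg _
    · have hut := hupos t ⟨h.le, ht.2⟩
      have hg1 : g t = t - θ₀ := max_eq_left (by linarith)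
      have hg2 : g (Θ ε t) = Θ ε t - θ₀ := max_eq_left (by linarith)
      rw [hg1, hg2]
      linarith
  have hφlow : ∀ t ∈ Icc θ₀ (θ₀ + r₀), d/2 * (d/2) ≤ φ t := by
    intro t ht
    have h1 := hlow t ht
    have h2 := hsin t ht
    have hg1 : g t = t - θ₀ := max_eq_left (by linarith [ht.1])
    have hg2 : g (Θ ε t) = Θ ε t - θ₀ := max_eq_left (by linarith [ht.1, hd_pos])
    have h3 : φ t = (Θ ε t - t) * Real.sin t := by
      simp only [hφdef, hg1, hg2]; ring
    rw [h3]
    exact mul_le_mul h1 h2 (by linarith) (by linarith)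
  have hφint : ∀ p q : ℝ, 0 ≤ p → p ≤ q → q ≤ π →
      IntervalIntegrable φ MeasureTheory.volume p q := by
    intro p q h1 h2 h3
    apply ContinuousOn.intervalIntegrable
    apply hφcont.mono
    rw [uIcc_of_le h2]
    exact Icc_subset_Icc h1 h3
  have hθ₀0 : 0 ≤ θ₀ := hθ₀.1
  have hsplit1 : (∫ t in (0:ℝ)..θ₀, φ t) + (∫ t in θ₀..(θ₀+r₀), φ t)
      = ∫ t in (0:ℝ)..(θ₀+r₀), φ t :=
    intervalIntegral.integral_add_adjacent_intervals
      (hφint 0 θ₀ le_rfl hθ₀0 hθ₀.2) (hφint θ₀ (θ₀+r₀) hθ₀0 (by linarith) hI)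
  have hsplit2 : (∫ t in (0:ℝ)..(θ₀+r₀), φ t) + (∫ t in (θ₀+r₀)..π, φ t)
      = ∫ t in (0:ℝ)..π, φ t :=
    intervalIntegral.integral_add_adjacent_intervals
      (hφint 0 (θ₀+r₀) le_rfl (by linarith) hI) (hφint (θ₀+r₀) π (by linarith) hI le_rfl)
  have hside1 : 0 ≤ ∫ t in (0:ℝ)..θ₀, φ t :=
    intervalIntegral.integral_nonneg hθ₀0
      (fun t ht => hφnonneg t ⟨ht.1, le_trans ht.2 hθ₀.2⟩)
  have hside2 : 0 ≤ ∫ t in (θ₀+r₀)..π, φ t :=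
    intervalIntegral.integral_nonneg hI
      (fun t ht => hφnonneg t ⟨by linarith [ht.1], ht.2⟩)
  have hmid : r₀ * (d/2*(d/2)) ≤ ∫ t in θ₀..(θ₀+r₀), φ t := by
    have h1 : (∫ _t in θ₀..(θ₀+r₀), (d/2*(d/2))) ≤ ∫ t in θ₀..(θ₀+r₀), φ t :=
      intervalIntegral.integral_mono_on (by linarith) intervalIntegrable_const
        (hφint θ₀ (θ₀+r₀) hθ₀0 (by linarith) hI) hφlow
    rwa [intervalIntegral.integral_const, smul_eq_mul, show θ₀+r₀-θ₀ = r₀ by ring] at h1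
  have hfinal : r₀ * (d/2*(d/2)) ≤ C₀ * ε / M := by
    have h1 : r₀ * (d/2*(d/2)) ≤ A - B := by
      rw [← hABsub]
      linarith
    linarith
  have hP : C₀ * ε / M = π * C₀ * ε ^ ((1:ℝ)+α) := by
    rw [hMdef, Real.rpow_neg hε0.le, Real.rpow_add hε0, Real.rpow_one]
    have hεα' : (0:ℝ) < ε ^ α := rpow_pos_of_pos hε0 α
    field_simp
  rw [hP] at hfinal
  set P := π * C₀ * ε ^ ((1:ℝ)+α) with hPdef
  have hPpos : 0 < P := by positivity
  -- final case analysis on the min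
  rcases le_total (d/6) b with hmin | hmin
  · -- r₀ = d/6
    have hr : r₀ = d/6 := min_eq_left hmin
    rw [hr] at hfinal
    have h1 : d ^ ((3:ℕ):ℝ) ≤ 24 * π * C₀ * ε ^ ((1:ℝ)+α) := by
      rw [Real.rpow_natCast]
      calc (d:ℝ)^(3:ℕ) = 24*(d/6*(d/2*(d/2))) := by ring
      _ ≤ 24*P := by linarith
      _ = 24 * π * C₀ * ε ^ ((1:ℝ)+α) := by rw [hPdef]; ring
    have h2 : d ≤ (24 * π * C₀ * ε ^ ((1:ℝ)+α)) ^ ((1:ℝ)/3) := by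
      have := rpow_root_le hd0 (by norm_num : (0:ℝ) < 3) (by exact_mod_cast h1)
      exact_mod_cast this
    have h3 : (24 * π * C₀ * ε ^ ((1:ℝ)+α)) ^ ((1:ℝ)/3)
        = T2 * ε ^ (((1:ℝ)+α)*(1/3)) := by
      rw [Real.mul_rpow (by positivity) (by positivity), hT2def, ← Real.rpow_mul hε0.le]
    have h4 : ε ^ (((1:ℝ)+α)*(1/3)) ≤ ε ^ γ :=
      rpow_le_rpow_of_exponent_ge hε0 hε1.le (by linarith)
    calc d ≤ T2 * ε ^ (((1:ℝ)+α)*(1/3)) := by rw [← h3]; exact h2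
    _ ≤ T2 * ε ^ γ := mul_le_mul_of_nonneg_left h4 hT2.le
    _ ≤ (π + 6*C + T2 + T3) * ε ^ γ := mul_le_mul_of_nonneg_right (by linarith) hεγ.le
  · -- r₀ = b
    have hr : r₀ = b := min_eq_right hmin
    rw [hr] at hfinal
    have hd2 : (0:ℝ) < d^2 := by positivity
    have h1 : b ≤ 4*P/d^2 := by
      rw [le_div_iff₀ hd2]
      calc b * d^2 = 4*(b*(d/2*(d/2))) := by ring
      _ ≤ 4*P := by linarith
    have h2 : b ^ β ≤ (4*P/d^2) ^ β := rpow_le_rpow hbpos.le h1 hβ0.le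
    rw [hbβ, Real.div_rpow (by positivity) (by positivity)] at h2
    have h3 : ((d^2:ℝ)) ^ β = d ^ (2*β) := by
      rw [← Real.rpow_natCast d 2, ← Real.rpow_mul hd0]
      norm_num
    rw [h3] at h2
    -- h2 : d * ε^β' / (6*C) ≤ (4*P)^β / d^(2*β)
    have hd2β : 0 < d ^ (2*β) := rpow_pos_of_pos hd_pos _
    have hεβ'pos : 0 < ε ^ β' := rpow_pos_of_pos hε0 _
    rw [div_le_div_iff₀ (by positivity) hd2β] at h2
    -- h2 : d * ε^β' * d^(2*β) ≤ (4*P)^β * (6*C)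
    have h4 : d ^ ((1:ℝ)+2*β) * ε^β' ≤ 6*C*(4*P)^β := by
      calc d ^ ((1:ℝ)+2*β) * ε^β' = d * ε^β' * d^(2*β) := by
            rw [Real.rpow_add hd_pos, Real.rpow_one]; ring
      _ ≤ (4*P)^β * (6*C) := h2
      _ = 6*C*(4*P)^β := by ring
    have h5 : (4*P) ^ β = (4*π*C₀)^β * ε ^ (((1:ℝ)+α)*β) := by
      rw [hPdef, show 4*(π * C₀ * ε ^ ((1:ℝ)+α)) = (4*π*C₀) * ε ^ ((1:ℝ)+α) by ring,
        Real.mul_rpow (by positivity) (by positivity), ← Real.rpow_mul hε0.le]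
    have h6 : d ^ ((1:ℝ)+2*β) ≤ (6*C*(4*π*C₀)^β) * ε ^ (((1:ℝ)+α)*β - β') := by
      rw [Real.rpow_sub hε0, ← mul_div_assoc, le_div_iff₀ hεβ'pos]
      calc d ^ ((1:ℝ)+2*β) * ε^β' ≤ 6*C*(4*P)^β := h4
      _ = 6*C*(4*π*C₀)^β * ε ^ (((1:ℝ)+α)*β) := by rw [h5]; ring
    have h7 : d ≤ ((6*C*(4*π*C₀)^β) * ε ^ (((1:ℝ)+α)*β - β')) ^ ((1:ℝ)/(1+2*β)) :=
      rpow_root_le hd0 (by linarith) h6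
    have h8 : ((6*C*(4*π*C₀)^β) * ε ^ (((1:ℝ)+α)*β - β')) ^ ((1:ℝ)/(1+2*β))
        = T3 * ε ^ ((((1:ℝ)+α)*β - β') * (1/(1+2*β))) := by
      rw [Real.mul_rpow (by positivity) (by positivity), hT3def, ← Real.rpow_mul hε0.le]
    have h9 : ε ^ ((((1:ℝ)+α)*β - β') * (1/(1+2*β))) ≤ ε ^ γ := by
      apply rpow_le_rpow_of_exponent_ge hε0 hε1.le
      rw [mul_one_div, le_div_iff₀ (by linarith : (0:ℝ) < 1+2*β)]
      linarith [e2γ]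
    calc d ≤ T3 * ε ^ ((((1:ℝ)+α)*β - β') * (1/(1+2*β))) := by rw [← h8]; exact h7
    _ ≤ T3 * ε ^ γ := mul_le_mul_of_nonneg_left h9 hT3.le
    _ ≤ (π + 6*C + T2 + T3) * ε ^ γ := mul_le_mul_of_nonneg_right (by linarith) hεγ.le
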